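/- Let h : {0,1}* → {0,1,2,3}* be the morphism with h(0) = 2301 and h(1) = 301, and let x be any aperiodic infinite binary word. Then the infinite word h(x) over {0,1,2,3} has exactly 5 palindromic factors: the empty word, 0, 1, 2, and 3 (i.e., no palindromic factor of length ≥ 2). -/

import Mathlib

def IsFactor {α : Type*} (y x : List α) : Prop := ∃ u v, x = u ++ y ++ v

/-- The morphism `h(0) = 2301`, `h(1) = 301`. -/
def h : Fin 2 → List (Fin 4) := fun b => if b = 0 then [2, 3, 0, 1] else [3, 0, 1]

/-- The prefix of `h(x)` obtained from the first `n` letters of `x`. -/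
def Hpre (x : ℕ → Fin 2) (n : ℕ) : List (Fin 4) :=
  (List.range n).flatMap (fun i => h (x i))

def Rb : Fin 4 → Fin 4 → Bool := fun a b =>
  (a == 2 && b == 3) || (a == 3 && b == 0) || (a == 0 && b == 1) ||
  (a == 1 && b == 2) || (a == 1 && b == 3)

def R : Fin 4 → Fin 4 → Prop := fun a b => Rb a b = true

instance : DecidableRel R := fun a b => inferInstanceAs (Decidable (Rb a b = true))

lemma fin2_cases (a : Fin 2) : a = 0 ∨ a = 1 := by fin_cases a <;> simp

lemma Hpre_succ (x : ℕ → Fin 2) (n : ℕ) : Hpre x (n+1) = Hpre x n ++ h (x n) := by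
  simp [Hpre, List.range_succ]

lemma h_zero : h 0 = [2,3,0,1] := by simp [h]
lemma h_one : h 1 = [3,0,1] := by simp [h]

lemma chain_Hpre (x : ℕ → Fin 2) (n : ℕ) :
    List.Chain' R (Hpre x n) ∧ ∀ c ∈ (Hpre x n).getLast?, c = 1 := by
  induction n with
  | zero => simp [Hpre, List.Chain']
  | succ n ih =>
    rw [Hpre_succ]
    rcases fin2_cases (x n) with hb | hb
    all_goals {
      rw [hb]
      first | rw [h_zero] | rw [h_one]
      constructor
      · rw [List.Chain', List.isChain_append]
        refine ⟨ih.1, by simp [List.isChain_cons_cons, R, Rb], ?_⟩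
        intro a ha b hbb
        have := ih.2 a ha
        subst this
        simp at hbb
        subst hbb
        decide
      · intro c hc
        rw [List.getLast?_append] at hc
        simp at hc
        exact hc.symm }

lemma noRR : ∀ a b : Fin 4, ¬ (Rb a b = true ∧ Rb b a = true) := by decide

/-- If `x` is an aperiodic infinite binary word, then the infinite word `h(x)` over
`{0,1,2,3}` has exactly 5 palindromic factors: `ε, 0, 1, 2, 3`. -/
theorem image_word_five_palindromes (x : ℕ → Fin 2)
    (hx : ¬ ∃ p, 1 ≤ p ∧ ∃ N, ∀ m, N ≤ m → x (m + p) = x m) :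
    {u : List (Fin 4) | (∃ n, IsFactor u (Hpre x n)) ∧ u.reverse = u} =
      {[], [0], [1], [2], [3]} := by
  ext u
  simp only [Set.mem_setOf_eq, Set.mem_insert_iff, Set.mem_singleton_iff]
  constructor
  · rintro ⟨⟨n, u', v, hw⟩, hpal⟩
    have hinf : u <:+: Hpre x n := ⟨u', v, hw.symm⟩
    have hch : List.Chain' R u := (chain_Hpre x n).1.infix hinf
    match u, hpal, hch with
    | [], _, _ => left; rfl
    | [a], _, _ => fin_cases a <;> simp
    | a :: b :: t, hpal, hch =>
      exfalso
      have h1 : R a b := (List.isChain_cons.mp hch).1 b rfl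
      have hch2 : List.Chain' R (a :: b :: t).reverse := by rw [hpal]; exact hch
      rw [List.Chain', List.isChain_reverse] at hch2
      have h2 : R b a := (List.isChain_cons.mp hch2).1 b rfl
      exact noRR a b ⟨h1, h2⟩
  · have key1 : Hpre x 1 = h (x 0) := by rw [show (1:ℕ) = 0 + 1 from rfl, Hpre_succ]; simp [Hpre]
    rintro (rfl | rfl | rfl | rfl | rfl)
    · exact ⟨⟨0, [], [], by simp [Hpre]⟩, rfl⟩
    · refine ⟨⟨1, ?_⟩, rfl⟩
      rcases fin2_cases (x 0) with h0 | h0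
      · exact ⟨[2,3], [1], by rw [key1, h0]; rfl⟩
      · exact ⟨[3], [1], by rw [key1, h0]; rfl⟩
    · refine ⟨⟨1, ?_⟩, rfl⟩
      rcases fin2_cases (x 0) with h0 | h0
      · exact ⟨[2,3,0], [], by rw [key1, h0]; rfl⟩
      · exact ⟨[3,0], [], by rw [key1, h0]; rfl⟩
    · have hz : ∃ i, x i = 0 := by
        by_contra h'
        push_neg at h'
        apply hx
        refine ⟨1, le_refl 1, 0, fun m _ => ?_⟩
        rcases fin2_cases (x (m+1)) with h1 | h1 <;> rcases fin2_cases (x m) with h2 | h2 <;>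
          first | (exfalso; exact h' _ (by assumption)) | (rw [h1, h2])
      obtain ⟨i, hi⟩ := hz
      refine ⟨⟨i + 1, Hpre x i, [3,0,1], ?_⟩, rfl⟩
      rw [Hpre_succ, hi]; simp [h]
    · refine ⟨⟨1, ?_⟩, rfl⟩
      rcases fin2_cases (x 0) with h0 | h0
      · exact ⟨[2], [0,1], by rw [key1, h0]; rfl⟩
      · exact ⟨[], [0,1], by rw [key1, h0]; rfl⟩
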